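/- Let Λ ⊂ ℝ² be a lattice, i.e. the ℤ-span of two linearly independent vectors v₁, v₂, and let Y be a measurable fundamental domain of Λ with finite Lebesgue measure. Let R : ℝ² → ℝ² be the rotation by angle 2π/3 and assume R maps Λ onto Λ. Let g : ℝ² → ℂ² be locally integrable, Λ-periodic (g(y + v) = g(y) for all v ∈ Λ and almost every y), and satisfy g(R y) = R g(y) for almost every y ∈ ℝ², where R acts on ℂ² as the complexification of the real rotation matrix. Then ∫_Y g(y) dy = 0. -/

import Mathlib

noncomputable section

open MeasureTheory

/-- The rotation of the plane by angle `2π/3`, as a `2×2` real matrix. -/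
def Rot : Matrix (Fin 2) (Fin 2) ℝ :=
  !![Real.cos (2 * Real.pi / 3), -Real.sin (2 * Real.pi / 3);
     Real.sin (2 * Real.pi / 3), Real.cos (2 * Real.pi / 3)]

lemma detRot : Rot.det = 1 := by
  rw [Rot, Matrix.det_fin_two_of]
  nlinarith [Real.sin_sq_add_cos_sq (2 * Real.pi / 3)]

lemma cosRot : Real.cos (2 * Real.pi / 3) = -(1/2) := by
  have h : 2 * Real.pi / 3 = Real.pi - Real.pi / 3 := by ring
  rw [h, Real.cos_pi_sub, Real.cos_pi_div_three]

/-- Let `Λ ⊂ ℝ²` be the lattice spanned by two linearly independent vectors,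
`Y` a measurable fundamental domain of `Λ` of finite measure, and `R` the rotation by `2π/3`,
assumed to map `Λ` onto `Λ`. If `g : ℝ² → ℂ²` is locally integrable, `Λ`-periodic, and
`R`-equivariant (`g(Ry) = R g(y)` a.e., with `R` acting on `ℂ²` as the complexification of
the real rotation matrix), then `∫_Y g = 0`. -/
theorem statement2 (v₁ v₂ : Fin 2 → ℝ) (hind : LinearIndependent ℝ ![v₁, v₂])
    (Λ : AddSubgroup (Fin 2 → ℝ)) (hΛ : Λ = AddSubgroup.closure {v₁, v₂})
    (Y : Set (Fin 2 → ℝ)) (hYm : MeasurableSet Y) (hYfin : volume Y < ⊤)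
    (hfund : IsAddFundamentalDomain Λ Y volume)
    (hRΛ : Rot.mulVec '' (Λ : Set (Fin 2 → ℝ)) = (Λ : Set (Fin 2 → ℝ)))
    (g : (Fin 2 → ℝ) → (Fin 2 → ℂ))
    (hloc : LocallyIntegrable g volume)
    (hper : ∀ v ∈ Λ, ∀ᵐ y : Fin 2 → ℝ, g (y + v) = g y)
    (hequiv : ∀ᵐ y : Fin 2 → ℝ,
      g (Rot.mulVec y) = (Rot.map Complex.ofReal).mulVec (g y)) :
    ∫ y in Y, g y = 0 := by
  classical
  -- basis from the linearly independent family
  have hcard : Fintype.card (Fin 2) = Module.finrank ℝ (Fin 2 → ℝ) := by simp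
  set b : Module.Basis (Fin 2) ℝ (Fin 2 → ℝ) :=
    basisOfLinearIndependentOfCardEqFinrank hind hcard with hbdef
  have hbcoe : ⇑b = ![v₁, v₂] := coe_basisOfLinearIndependentOfCardEqFinrank hind hcard
  have hrange : Set.range ⇑b = {v₁, v₂} := by
    rw [hbcoe]
    ext x
    simp [Fin.exists_fin_two]
    tauto
  have hΛ' : Λ = (Submodule.span ℤ (Set.range ⇑b)).toAddSubgroup := by
    rw [hΛ, hrange, Submodule.span_int_eq_addSubgroupClosure]
  -- countability of Λ
  have hcount : Countable Λ := by
    rw [hΛ']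
    exact inferInstanceAs (Countable (Submodule.span ℤ (Set.range ⇑b)))
  -- the rotation as a linear equivalence
  have hdet : Rot.det ≠ 0 := by rw [detRot]; norm_num
  have hinv : Invertible Rot := Rot.invertibleOfIsUnitDet (by rw [detRot]; exact isUnit_one)
  set E : (Fin 2 → ℝ) ≃ₗ[ℝ] (Fin 2 → ℝ) := Rot.toLinearEquiv' hinv with hEdef
  have hEapp : ∀ x, E x = Rot.mulVec x := by
    intro x
    change Matrix.toLin' Rot x = _
    rw [Matrix.toLin'_apply]
  set F : (Fin 2 → ℝ) ≃ (Fin 2 → ℝ) := E.toEquiv with hFdef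
  have hFapp : ∀ x, F x = Rot.mulVec x := hEapp
  have hFmeas : Measurable F := E.toLinearMap.continuous_of_finiteDimensional.measurable
  have hFsymmMeas : Measurable F.symm :=
    E.symm.toLinearMap.continuous_of_finiteDimensional.measurable
  have hmp : MeasurePreserving F (volume : Measure (Fin 2 → ℝ)) volume := by
    refine ⟨hFmeas, ?_⟩
    have h1 : Measure.map F volume = Measure.map (Matrix.toLin' Rot) volume := by
      congr 1
    rw [h1, Real.map_matrix_volume_pi_eq_smul_volume_pi hdet]
    simp [detRot]
  have hmpsymm : MeasurePreserving F.symm (volume : Measure (Fin 2 → ℝ)) volume := by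
    constructor
    · exact hFsymmMeas
    · conv_lhs => rw [← hmp.map_eq]
      rw [Measure.map_map hFsymmMeas hFmeas]
      have : (F.symm ∘ F) = id := by funext x; simp
      rw [this, Measure.map_id]
  have hFemb : MeasurableEmbedding F :=
    (MeasurableEquiv.mk F hFmeas hFsymmMeas).measurableEmbedding
  -- the induced equivalence of Λ
  have hmem : ∀ v : Λ, Rot.mulVec (v : Fin 2 → ℝ) ∈ Λ := by
    intro v
    have : Rot.mulVec (v : Fin 2 → ℝ) ∈ Rot.mulVec '' (Λ : Set (Fin 2 → ℝ)) :=
      ⟨v, v.2, rfl⟩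
    rwa [hRΛ] at this
  set φ : Λ → Λ := fun v => ⟨Rot.mulVec (v : Fin 2 → ℝ), hmem v⟩ with hφdef
  have hφbij : Function.Bijective φ := by
    constructor
    · intro a c h
      have h' : Rot.mulVec (a : Fin 2 → ℝ) = Rot.mulVec (c : Fin 2 → ℝ) :=
        congrArg Subtype.val h
      have : E a = E c := by rw [hEapp, hEapp]; exact h'
      exact Subtype.ext (E.injective this)
    · intro w
      have hw : (w : Fin 2 → ℝ) ∈ Rot.mulVec '' (Λ : Set (Fin 2 → ℝ)) := by
        rw [hRΛ]; exact w.2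
      obtain ⟨v, hv, hveq⟩ := hw
      exact ⟨⟨v, hv⟩, Subtype.ext hveq⟩
  set σ : Λ ≃ Λ := Equiv.ofBijective φ hφbij with hσdef
  have hef : ∀ v : Λ, Function.Semiconj F ((σ.symm v) +ᵥ ·) (v +ᵥ ·) := by
    intro v x
    have h1 : φ (σ.symm v) = v := σ.apply_symm_apply v
    have h2 : Rot.mulVec ((σ.symm v : Λ) : Fin 2 → ℝ) = (v : Fin 2 → ℝ) :=
      congrArg Subtype.val h1
    show F (((σ.symm v : Λ) : Fin 2 → ℝ) + x) = (v : Fin 2 → ℝ) + F x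
    rw [hFapp, hFapp, Matrix.mulVec_add, h2]
  have hfundR : IsAddFundamentalDomain Λ (F '' Y) volume :=
    hfund.image_of_equiv F hmpsymm.quasiMeasurePreserving σ.symm hef
  -- pointwise periodic modification of g
  set A : Set (Fin 2 → ℝ) := {y | ∀ v : Λ, g (y + (v : Fin 2 → ℝ)) = g y} with hAdef
  have hAinv : ∀ (v : Λ) (x : Fin 2 → ℝ), x ∈ A → (v : Fin 2 → ℝ) + x ∈ A := by
    intro v x hx w
    have h1 : (v : Fin 2 → ℝ) + x + (w : Fin 2 → ℝ) = x + ((v + w : Λ) : Fin 2 → ℝ) := by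
      push_cast; abel
    have h2 : (v : Fin 2 → ℝ) + x = x + (v : Fin 2 → ℝ) := by abel
    rw [h1, h2, hx (v + w), hx v]
  set g' : (Fin 2 → ℝ) → (Fin 2 → ℂ) := A.indicator g with hg'def
  have hg'per : ∀ (v : Λ) (x : Fin 2 → ℝ), g' (v +ᵥ x) = g' x := by
    intro v x
    show g' ((v : Fin 2 → ℝ) + x) = g' x
    by_cases hx : x ∈ A
    · have hvx : (v : Fin 2 → ℝ) + x ∈ A := hAinv v x hx
      rw [hg'def, Set.indicator_of_mem hvx, Set.indicator_of_mem hx]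
      have h2 : (v : Fin 2 → ℝ) + x = x + (v : Fin 2 → ℝ) := by abel
      rw [h2]; exact hx v
    · have hvx : (v : Fin 2 → ℝ) + x ∉ A := by
        intro hmem
        have := hAinv (-v) _ hmem
        have h3 : ((-v : Λ) : Fin 2 → ℝ) + ((v : Fin 2 → ℝ) + x) = x := by
          push_cast; abel
        rw [h3] at this
        exact hx this
      rw [hg'def, Set.indicator_of_notMem hvx, Set.indicator_of_notMem hx]
  have hAae : ∀ᵐ y : Fin 2 → ℝ, y ∈ A := by
    have : ∀ᵐ y : Fin 2 → ℝ, ∀ v : Λ, g (y + (v : Fin 2 → ℝ)) = g y :=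
      ae_all_iff.mpr fun v => hper v v.2
    exact this
  have hg'ae : g' =ᵐ[volume] g := by
    filter_upwards [hAae] with y hy
    rw [hg'def, Set.indicator_of_mem hy]
  -- integrability of g' on Y via the bounded fundamental domain
  have hfundP : IsAddFundamentalDomain Λ (ZSpan.fundamentalDomain b) volume := by
    rw [hΛ']
    exact ZSpan.isAddFundamentalDomain' b volume
  have hPbd : Bornology.IsBounded (ZSpan.fundamentalDomain b) :=
    ZSpan.fundamentalDomain_isBounded b
  have hgP : IntegrableOn g (ZSpan.fundamentalDomain b) volume := by
    have hc : IsCompact (closure (ZSpan.fundamentalDomain b)) :=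
      Metric.isCompact_of_isClosed_isBounded isClosed_closure hPbd.closure
    exact (hloc.integrableOn_isCompact hc).mono_set subset_closure
  have hg'P : IntegrableOn g' (ZSpan.fundamentalDomain b) volume :=
    hgP.congr_fun_ae (ae_restrict_of_ae hg'ae.symm)
  have hg'Y : IntegrableOn g' Y volume :=
    (hfund.integrableOn_iff hfundP hg'per).mpr hg'P
  -- the chain of integral identities
  have h1 : ∫ y in Y, g y = ∫ y in Y, g' y :=
    integral_congr_ae (ae_restrict_of_ae hg'ae.symm)
  have h2 : ∫ y in Y, g' y = ∫ y in F '' Y, g' y :=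
    hfund.setIntegral_eq hfundR hg'per
  have h3 : ∫ y in F '' Y, g' y = ∫ y in Y, g' (F y) :=
    hmp.setIntegral_image_emb hFemb g' Y
  set M : Matrix (Fin 2) (Fin 2) ℂ := Rot.map Complex.ofReal with hMdef
  have h4ae : ∀ᵐ y : Fin 2 → ℝ, g' (F y) = M.mulVec (g' y) := by
    have hcomp : (fun y => g' (F y)) =ᵐ[volume] (fun y => g (F y)) :=
      hmp.quasiMeasurePreserving.ae_eq_comp hg'ae
    filter_upwards [hcomp, hequiv, hg'ae] with y hy1 hy2 hy3
    rw [hy1, hFapp, hy2, hy3]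
  have h4 : ∫ y in Y, g' (F y) = ∫ y in Y, M.mulVec (g' y) :=
    integral_congr_ae (ae_restrict_of_ae h4ae)
  -- pull the linear map out of the integral
  set L : (Fin 2 → ℂ) →L[ℂ] (Fin 2 → ℂ) :=
    LinearMap.toContinuousLinearMap M.mulVecLin with hLdef
  have hLapp : ∀ x, L x = M.mulVec x := fun x => rfl
  have h5 : ∫ y in Y, M.mulVec (g' y) = M.mulVec (∫ y in Y, g' y) := by
    have := L.integral_comp_comm hg'Y
    simpa [hLapp] using this
  set I : Fin 2 → ℂ := ∫ y in Y, g' y with hIdef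
  have hfix : I = M.mulVec I := h2.trans (h3.trans (h4.trans h5))
  -- solve the linear system
  have e0 := congrFun hfix 0
  have e1 := congrFun hfix 1
  set c : ℝ := Real.cos (2 * Real.pi / 3) with hcdef
  set s : ℝ := Real.sin (2 * Real.pi / 3) with hsdef
  have hMV : ∀ x : Fin 2 → ℂ, M.mulVec x = ![(c : ℂ) * x 0 + (-(s : ℂ)) * x 1,
      (s : ℂ) * x 0 + (c : ℂ) * x 1] := by
    intro x
    funext i
    fin_cases i <;>
    · simp [hMdef, Rot, Matrix.mulVec, dotProduct, Fin.sum_univ_two, Matrix.map_apply]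
      rw [hcdef, hsdef]
      push_cast
      ring
  rw [hMV I] at e0 e1
  simp only [Matrix.cons_val_zero, Matrix.cons_val_one, Matrix.head_cons] at e0 e1
  have hcc : (c : ℂ) = -(1/2) := by rw [hcdef, cosRot]; push_cast; ring
  have hsc : (s : ℂ) ^ 2 + (c : ℂ) ^ 2 = 1 := by
    have := Real.sin_sq_add_cos_sq (2 * Real.pi / 3)
    rw [hcdef, hsdef]
    push_cast
    exact Complex.sin_sq_add_cos_sq _
  rw [hcc] at e0 e1 hsc
  have hI0 : I 0 = 0 := by
    have key : (3 : ℂ) * I 0 = 0 := by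
      linear_combination (3/2 : ℂ) * e0 - (s : ℂ) * e1 - I 0 * hsc
    exact (mul_eq_zero.mp key).resolve_left (by norm_num)
  have hI1 : I 1 = 0 := by
    have key : (3 : ℂ) * I 1 = 0 := by
      linear_combination (s : ℂ) * e0 + (3/2 : ℂ) * e1 - I 1 * hsc
    exact (mul_eq_zero.mp key).resolve_left (by norm_num)
  rw [h1]
  funext i
  fin_cases i
  · exact hI0
  · exact hI1
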